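/- (Douady–Hubbard / Gleason for preperiodic parameters) Let d ≥ 2 and Γ_n ∈ ℤ[b] with Γ_0 = 0, Γ_{n+1} = Γ_n^d + b. For N > n ≥ 1, every multiple root of Γ_N - Γ_n (in ℚ̄) is a root of Γ_{N-1} - Γ_{n-1}. -/

import Mathlib

open Polynomial NNReal

noncomputable section AuxMRD

private abbrev KK := AlgebraicClosure ℚ

private theorem mrd_not_unit (d : ℕ) (hd : 2 ≤ d) (t : KK) (ht : IsIntegral ℤ t)
    (h : (d : KK) * t = 1) : False := by
  have hdK : (d : KK) ≠ 0 := Nat.cast_ne_zero.2 (by omega)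
  have ht' : t = algebraMap ℚ KK ((d : ℚ)⁻¹) := by
    field_simp
    rw [mul_comm] at h
    rw [map_div₀, map_one, map_natCast]; exact eq_one_div_of_mul_eq_one_left h
  rw [ht'] at ht
  have h2 : IsIntegral ℤ ((d:ℚ)⁻¹) := (isIntegral_algebraMap_iff (algebraMap ℚ KK).injective).1 ht
  obtain ⟨z, hz⟩ := IsIntegrallyClosed.isIntegral_iff.1 h2
  have h3 : (d : ℚ) * z = 1 := by
    rw [show ((z:ℚ)) = (d:ℚ)⁻¹ by exact_mod_cast hz]; field_simp
  have h4 : (d * z : ℤ) = 1 := by exact_mod_cast h3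
  have := Int.eq_one_of_mul_eq_one_right (by positivity) h4
  omega



theorem mrd_no_small (d : ℕ) (hd : 3 ≤ d) (α : KK) (hα : IsIntegral ℤ α)
    (h : ((1 : KK) + d * α) ^ d = 1) : α = 0 := by
  by_contra hne
  have hαℚ : IsIntegral ℚ α := hα.tower_top
  set p := minpoly ℚ α with hp
  have hpmon : p.Monic := minpoly.monic hαℚ
  have hdeg : 1 ≤ p.natDegree := minpoly.natDegree_pos hαℚ
  have hpint : p = (minpoly ℤ α).map (algebraMap ℤ ℚ) :=
    minpoly.isIntegrallyClosed_eq_field_fractions' ℚ hα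
  have hc0 : p.coeff 0 ≠ 0 := fun hc => hne ((minpoly.coeff_zero_eq_zero hαℚ).1 hc)
  set q : ℚ[X] := (C (d:ℚ) * X + 1) ^ d - 1 with hq
  have hqα : aeval α q = 0 := by
    simp only [hq, map_sub, map_pow, map_add, map_mul, aeval_C, aeval_X, map_one]
    rw [show (algebraMap ℚ KK) (d:ℚ) = (d : KK) by simp]
    rw [show (d:KK) * α + 1 = 1 + d * α by ring, h, sub_self]
  have hdvd : p ∣ q := minpoly.dvd ℚ α hqα
  set P := p.map (algebraMap ℚ ℂ) with hP
  have hPmon : P.Monic := hpmon.map _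
  have hPdeg : P.natDegree = p.natDegree := hpmon.natDegree_map _
  have hsplit : P.Splits := IsAlgClosed.splits _
  have hcard : P.roots.card = P.natDegree := by
    have := hsplit.natDegree_eq_card_roots
    simpa using this.symm
  have hroot : ∀ z ∈ P.roots, ‖z‖₊ ≤ 2 / (d : ℝ≥0) := by
    intro z hz
    have hz0 : P.eval z = 0 := (mem_roots'.1 hz).2
    have hq0 : (q.map (algebraMap ℚ ℂ)).eval z = 0 := by
      obtain ⟨r, hr⟩ := hdvd
      rw [hr, Polynomial.map_mul, eval_mul, hz0, zero_mul]
    have hz1 : ((d:ℂ) * z + 1) ^ d = 1 := by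
      simp only [hq, Polynomial.map_sub, Polynomial.map_pow, Polynomial.map_add,
        Polynomial.map_mul, map_C, map_X, Polynomial.map_one, eval_sub, eval_pow,
        eval_add, eval_mul, eval_C, eval_X, eval_one] at hq0
      rw [sub_eq_zero] at hq0
      simpa using hq0
    have habs : ‖(d:ℂ) * z + 1‖₊ = 1 := by
      have hh : ‖(d:ℂ) * z + 1‖₊ ^ d = 1 := by
        rw [← nnnorm_pow, hz1, nnnorm_one]
      exact (pow_eq_one_iff_of_nonneg zero_le (by omega)).1 hh
    have h2 : (d : ℝ≥0) * ‖z‖₊ ≤ 2 := by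
      calc (d : ℝ≥0) * ‖z‖₊ = ‖(d:ℂ) * z‖₊ := by
            rw [nnnorm_mul]
            congr 1
            ext
            simp
        _ = ‖((d:ℂ) * z + 1) - 1‖₊ := by ring_nf
        _ ≤ ‖(d:ℂ) * z + 1‖₊ + ‖(1:ℂ)‖₊ := nnnorm_sub_le _ _
        _ = 2 := by rw [habs, nnnorm_one]; norm_num
    have hd0 : (0:ℝ≥0) < (d:ℝ≥0) := by
      exact_mod_cast (by omega : 0 < d)
    rw [le_div_iff₀ hd0]
    rwa [mul_comm] at h2
  have hprod : P.coeff 0 = (-1) ^ P.natDegree * P.roots.prod :=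
    hsplit.coeff_zero_eq_prod_roots_of_monic hPmon
  have hbound : ‖P.coeff 0‖₊ ≤ (2 / (d:ℝ≥0)) ^ P.natDegree := by
    rw [hprod, nnnorm_mul, nnnorm_pow, nnnorm_neg, nnnorm_one, one_pow, one_mul]
    calc ‖P.roots.prod‖₊ = (P.roots.map (fun z => ‖z‖₊)).prod := by
          exact (Multiset.prod_hom P.roots (nnnormHom : ℂ →*₀ ℝ≥0).toMonoidHom).symm
      _ ≤ (2 / (d:ℝ≥0)) ^ (P.roots.map (fun z => ‖z‖₊)).card := by
          apply Multiset.prod_le_pow_card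
          intro x hx
          obtain ⟨z, hz, rfl⟩ := Multiset.mem_map.1 hx
          exact hroot z hz
      _ = (2 / (d:ℝ≥0)) ^ P.natDegree := by rw [Multiset.card_map, hcard]
  have hlow : (1:ℝ≥0) ≤ ‖P.coeff 0‖₊ := by
    have hcc : P.coeff 0 = ((minpoly ℤ α).coeff 0 : ℂ) := by
      rw [hP, coeff_map, hpint, coeff_map]; simp
    rw [hcc]
    have hcz : (minpoly ℤ α).coeff 0 ≠ 0 := by
      intro hz; apply hc0; rw [hpint, coeff_map, hz]; simp
    have hr : (1:ℝ) ≤ ‖((minpoly ℤ α).coeff 0 : ℂ)‖ := by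
      rw [Complex.norm_intCast]
      exact_mod_cast Int.one_le_abs hcz
    rw [← NNReal.coe_le_coe, coe_nnnorm]
    simpa using hr
  have hsmall : ((2 / (d:ℝ≥0))) ^ P.natDegree < 1 := by
    apply pow_lt_one₀ (zero_le) _ (by rw [hPdeg]; omega)
    rw [div_lt_one (by exact_mod_cast (by omega : 0 < d))]
    have h3 : (3:ℝ≥0) ≤ (d:ℝ≥0) := by exact_mod_cast hd
    calc (2:ℝ≥0) < 3 := by norm_num
      _ ≤ (d:ℝ≥0) := h3
  exact absurd (hlow.trans hbound) (not_le.2 hsmall)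

end AuxMRD

open Polynomial in
theorem multiple_root_descends (d : ℕ) (hd : 2 ≤ d)
    (Γ : ℕ → Polynomial ℤ) (h0 : Γ 0 = 0) (hrec : ∀ m, Γ (m + 1) = (Γ m) ^ d + X)
    (N n : ℕ) (hn : 1 ≤ n) (hNn : n < N) :
    ∀ β : AlgebraicClosure ℚ,
      ((Γ N - Γ n).map (Int.castRingHom (AlgebraicClosure ℚ))).eval β = 0 →
      (derivative ((Γ N - Γ n).map (Int.castRingHom (AlgebraicClosure ℚ)))).eval β = 0 →
      ((Γ (N - 1) - Γ (n - 1)).map (Int.castRingHom (AlgebraicClosure ℚ))).eval β = 0 := by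
  intro β hP hP'
  set φ := Int.castRingHom (AlgebraicClosure ℚ) with hφ
  set g : ℕ → AlgebraicClosure ℚ := fun m => ((Γ m).map φ).eval β with hgdef
  set u : ℕ → AlgebraicClosure ℚ := fun m => (derivative ((Γ m).map φ)).eval β with hudef
  have hg0 : g 0 = 0 := by simp [hgdef, h0]
  have hu0 : u 0 = 0 := by simp [hudef, h0]
  have hgrec : ∀ m, g (m + 1) = g m ^ d + β := by
    intro m
    simp [hgdef, hrec m, Polynomial.map_add, Polynomial.map_pow]
  have hurec : ∀ m, u (m + 1) = (d : AlgebraicClosure ℚ) * g m ^ (d - 1) * u m + 1 := by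
    intro m
    simp only [hudef, hgdef, hrec m, Polynomial.map_add, Polynomial.map_pow, Polynomial.map_X,
      derivative_add, derivative_X, derivative_pow, eval_add, eval_mul, eval_pow, eval_one,
      eval_natCast, eval_C]
  -- monic
  have hmono : ∀ m, 1 ≤ m → (Γ m).Monic ∧ (Γ m).natDegree = d ^ (m - 1) := by
    intro m hm
    induction m with
    | zero => omega
    | succ k ih =>
      rcases Nat.eq_or_lt_of_le hm with h1 | h1
      · have hΓ1 : Γ 1 = X := by
          rw [show (1:ℕ) = 0 + 1 from rfl, hrec, h0, zero_pow (by omega), zero_add]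
        rw [← h1]
        simp [hΓ1, monic_X]
      · have hk : 1 ≤ k := by omega
        obtain ⟨hkm, hkd⟩ := ih hk
        have hpm : (Γ k ^ d).Monic := hkm.pow d
        have hdeg : (Γ k ^ d).natDegree = d ^ k := by
          rw [hkm.natDegree_pow, hkd, ← pow_succ']
          congr 1
          omega
        have hdX : (X : Polynomial ℤ).degree < (Γ k ^ d).degree := by
          rw [degree_X, degree_eq_natDegree hpm.ne_zero, hdeg]
          exact_mod_cast (by calc 1 < d := by omega
                                _ ≤ d ^ k := Nat.le_self_pow (by omega) d : 1 < d ^ k)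
        constructor
        · rw [hrec]
          exact hpm.add_of_left hdX
        · rw [hrec, natDegree_add_eq_left_of_degree_lt hdX, hdeg]
          congr 1
  -- β is an algebraic integer
  have haev : ∀ p : Polynomial ℤ, aeval β p = (p.map φ).eval β := by
    intro p
    rw [aeval_def, eval₂_eq_eval_map, hφ, Subsingleton.elim (algebraMap ℤ (AlgebraicClosure ℚ)) (Int.castRingHom _)]
  have hβ : IsIntegral ℤ β := by
    refine ⟨Γ N - Γ n, ?_, ?_⟩
    · obtain ⟨hmN, hdN⟩ := hmono N (by omega)
      obtain ⟨hmn, hdn⟩ := hmono n hn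
      have : (Γ n).degree < (Γ N).degree := by
        rw [degree_eq_natDegree hmn.ne_zero, degree_eq_natDegree hmN.ne_zero, hdn, hdN]
        exact_mod_cast Nat.pow_lt_pow_right (by omega) (by omega)
      have := hmN.add_of_left (q := -(Γ n)) (by rwa [degree_neg])
      simpa [sub_eq_add_neg] using this
    · rw [← aeval_def, haev]; exact hP
  have hdint : IsIntegral ℤ ((d : AlgebraicClosure ℚ)) := by
    have : ((d:ℤ) : AlgebraicClosure ℚ) = (d : AlgebraicClosure ℚ) := by push_cast; ring
    rw [← this]
    exact isIntegral_algebraMap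
  have hgint : ∀ m, IsIntegral ℤ (g m) := by
    intro m
    induction m with
    | zero => rw [hg0]; exact isIntegral_zero
    | succ k ih => rw [hgrec]; exact (ih.pow d).add hβ
  have huint : ∀ m, IsIntegral ℤ (u m) := by
    intro m
    induction m with
    | zero => rw [hu0]; exact isIntegral_zero
    | succ k ih =>
      rw [hurec]
      exact ((hdint.mul ((hgint k).pow _)).mul ih).add isIntegral_one
  -- decompose N and n
  obtain ⟨N', rfl⟩ : ∃ N', N = N' + 1 := ⟨N - 1, by omega⟩
  obtain ⟨n', rfl⟩ : ∃ n', n = n' + 1 := ⟨n - 1, by omega⟩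
  simp only [Nat.add_sub_cancel]
  rw [Polynomial.map_sub, eval_sub] at hP ⊢
  rw [Polynomial.map_sub, derivative_sub, eval_sub] at hP'
  change g (N' + 1) - g (n' + 1) = 0 at hP
  change u (N' + 1) - u (n' + 1) = 0 at hP'
  change g N' - g n' = 0
  rw [sub_eq_zero] at hP hP' ⊢
  set x := g N' with hx
  set y := g n' with hy
  have hxy : x ^ d = y ^ d := by
    have := hP
    rw [hgrec, hgrec] at this
    exact add_right_cancel this
  have hdK : (d : AlgebraicClosure ℚ) ≠ 0 := Nat.cast_ne_zero.2 (by omega)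
  have hkey : x ^ (d - 1) * u N' = y ^ (d - 1) * u n' := by
    have := hP'
    rw [hurec, hurec] at this
    have h2 := add_right_cancel this
    rw [mul_assoc, mul_assoc] at h2
    exact mul_left_cancel₀ hdK h2
  by_contra hne
  -- y ≠ 0
  have hy0 : y ≠ 0 := by
    intro h
    apply hne
    rw [h] at hxy ⊢
    rw [zero_pow (by omega : d ≠ 0)] at hxy
    exact pow_eq_zero_iff (by omega : d ≠ 0) |>.1 hxy
  set ζ := x / y with hζ
  have hxζ : x = ζ * y := by rw [hζ, div_mul_cancel₀ _ hy0]
  have hζd : ζ ^ d = 1 := by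
    rw [hζ, div_pow, hxy, div_self (pow_ne_zero _ hy0)]
  have hζ1 : ζ ≠ 1 := by
    intro h
    apply hne
    rw [h, one_mul] at hxζ
    exact hxζ
  have hζint : IsIntegral ℤ ζ := by
    refine ⟨X ^ d - C 1, monic_X_pow_sub_C 1 (by omega), ?_⟩
    simp [eval₂_sub, eval₂_pow, hζd]
  -- cancel y^(d-1): ζ^(d-1) * u N' = u n'
  have hUV : ζ ^ (d - 1) * u N' = u n' := by
    have h1 : x ^ (d-1) = ζ ^ (d-1) * y ^ (d-1) := by rw [hxζ, mul_pow]
    rw [h1] at hkey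
    apply mul_left_cancel₀ (pow_ne_zero (d-1) hy0)
    calc y^(d-1) * (ζ^(d-1) * u N') = ζ^(d-1) * y^(d-1) * u N' := by ring
      _ = y^(d-1) * u n' := hkey
  -- dispose of n' = 0
  rcases n' with _ | m
  · exact hy0 hg0
  -- now n' = m + 1 ≥ 1, and N' ≥ m + 2 ≥ 2
  obtain ⟨M, rfl⟩ : ∃ M, N' = M + 1 := ⟨N' - 1, by omega⟩
  set A := g M ^ (d - 1) * u M with hA
  set B := g m ^ (d - 1) * u m with hB
  have hAint : IsIntegral ℤ A := ((hgint M).pow _).mul (huint M)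
  have hBint : IsIntegral ℤ B := ((hgint m).pow _).mul (huint m)
  have hU : u (M + 1) = 1 + (d : AlgebraicClosure ℚ) * A := by rw [hurec]; ring
  have hV : u (m + 1) = 1 + (d : AlgebraicClosure ℚ) * B := by rw [hurec]; ring
  have hζδ : ζ ^ (d - 1) * ζ = 1 := by
    have hh : ζ ^ (d - 1 + 1) = 1 := by rw [show d - 1 + 1 = d by omega]; exact hζd
    rwa [pow_succ] at hh
  have hUV' : ζ ^ (d - 1) * (1 + (d : AlgebraicClosure ℚ) * A)
      = 1 + (d : AlgebraicClosure ℚ) * B := by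
    rw [← hU, ← hV]; exact hUV
  have hζα : ζ = 1 + (d : AlgebraicClosure ℚ) * (A - ζ * B) := by
    linear_combination (1 + (d : AlgebraicClosure ℚ) * A) * hζδ - ζ * hUV'
  rcases Nat.lt_or_ge d 3 with hd3 | hd3
  · -- d = 2
    have hd2 : d = 2 := by omega
    subst hd2
    have hζm1 : ζ = -1 := by
      have hfac : (ζ - 1) * (ζ + 1) = 0 := by linear_combination hζd
      rcases mul_eq_zero.1 hfac with hf | hf
      · exact absurd (sub_eq_zero.1 hf) hζ1
      · exact eq_neg_of_add_eq_zero_left hf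
    -- w ≡ g (mod 2)
    have hw : ∀ j, ∃ t, IsIntegral ℤ t ∧ g j ^ (2 - 1) * u j = g j + 2 * t := by
      intro j
      rcases j with _ | j'
      · exact ⟨0, isIntegral_zero, by rw [hg0, hu0]; ring⟩
      · refine ⟨g (j' + 1) * (g j' ^ (2 - 1) * u j'), ((hgint _).mul (((hgint _).pow _).mul (huint _))), ?_⟩
        rw [hurec]; ring
    obtain ⟨t1, ht1i, ht1⟩ := hw M
    obtain ⟨t2, ht2i, ht2⟩ := hw m
    have hneg : u (M + 1) + u (m + 1) = 0 := by
      have h5 : ζ ^ (2 - 1) * u (M + 1) = u (m + 1) := hUV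
      rw [hζm1] at h5
      simpa using by linear_combination -h5
    have hU' : u (M + 1) = 1 + 2 * g M + 4 * t1 := by
      rw [hurec]; linear_combination 2 * ht1
    have hV' : u (m + 1) = 1 + 2 * g m + 4 * t2 := by
      rw [hurec]; linear_combination 2 * ht2
    have hS : g M + g m = -1 - 2 * (t1 + t2) := by
      rw [hU', hV'] at hneg
      linear_combination ((1 : AlgebraicClosure ℚ)/2) * hneg
    have hxyeq : g M ^ 2 + β = -(g m ^ 2 + β) := by
      have h6 : g (M + 1) = -(g (m + 1)) := by
        rw [← hx, ← hy, hxζ, hζm1]; ring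
      rw [hgrec, hgrec] at h6
      exact h6
    have hfinal : (2 : AlgebraicClosure ℚ) *
        (-β + g M * g m - 2 * (t1 + t2) - 2 * (t1 + t2) ^ 2) = 1 := by
      linear_combination (-1 : AlgebraicClosure ℚ) * hxyeq
        + (g M + g m - 1 - 2 * (t1 + t2)) * hS
    apply mrd_not_unit 2 (by norm_num) _ ?_ hfinal
    have h2K : IsIntegral ℤ ((2 : AlgebraicClosure ℚ)) := by
      simpa using hdint
    exact ((hβ.neg.add ((hgint M).mul (hgint m))).sub
      (h2K.mul (ht1i.add ht2i))).sub (h2K.mul ((ht1i.add ht2i).pow 2))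
  · -- d ≥ 3
    have hα0 : A - ζ * B = 0 := by
      apply mrd_no_small d hd3 _ (hAint.sub (hζint.mul hBint))
      rw [← hζα]; exact hζd
    apply hζ1
    rw [hζα, hα0, mul_zero, add_zero]
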